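/- Let q be a positive integer, ξ = e^{-iπ/q}, and η(z) = (z+1)/(z-1). Define, for integers m, P(m) = (1 + ξ^m)·(1 + Σ_{k=1}^{q-1} ξ^{km} ∏_{j=1}^{k} η(ξ^j)). Then P(m) = 0 for all m with q ≤ m ≤ 2q-1. -/

import Mathlib

open Complex Finset

/-- The product `c_k = ∏_{j=1}^k η(ξ^j)` from the Hanson–Lewy construction. -/
noncomputable def lewyC (ξ : ℂ) (k : ℕ) : ℂ :=
  ∏ j ∈ Finset.Icc 1 k, (ξ ^ j + 1) / (ξ ^ j - 1)

/-- The generating sum `G(w) = Σ_{k=0}^{q-1} c_k w^k`. -/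
noncomputable def lewyG (ξ : ℂ) (q : ℕ) (w : ℂ) : ℂ :=
  ∑ k ∈ Finset.range q, lewyC ξ k * w ^ k

lemma lewy_pow_ne_one (q : ℕ) (hq : 1 ≤ q) (ξ : ℂ)
    (hξ : ξ = Complex.exp (-(Real.pi * Complex.I) / q))
    (k : ℕ) (hk1 : 1 ≤ k) (hk2 : k ≤ 2 * q - 1) : ξ ^ k ≠ 1 := by
  intro h
  rw [hξ, ← Complex.exp_nat_mul, Complex.exp_eq_one_iff] at h
  obtain ⟨n, hn⟩ := h
  have hq0 : (q : ℂ) ≠ 0 := Nat.cast_ne_zero.mpr (by omega)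
  have hq0' : (q : ℝ) ≠ 0 := Nat.cast_ne_zero.mpr (by omega)
  have hI : Complex.I ≠ 0 := Complex.I_ne_zero
  -- turn into a real equation
  have hre : -((k : ℝ) * Real.pi) / q = n * (2 * Real.pi) := by
    have h1 : (k : ℂ) * (-(Real.pi * Complex.I) / q) =
        ((-((k : ℝ) * Real.pi) / q : ℝ) : ℂ) * Complex.I := by
      push_cast
      ring
    have h2 : ((n : ℂ)) * (2 * Real.pi * Complex.I) =
        (((n : ℝ) * (2 * Real.pi) : ℝ) : ℂ) * Complex.I := by
      push_cast
      ring
    rw [h1, h2] at hn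
    have := mul_right_cancel₀ hI hn
    exact_mod_cast this
  have hπ : 0 < Real.pi := Real.pi_pos
  have hqR : (0:ℝ) < q := by exact_mod_cast (by omega : 0 < q)
  have hkR : (1:ℝ) ≤ k := by exact_mod_cast hk1
  have hkR2 : (k:ℝ) ≤ 2 * q - 1 := by
    have h0 : (k:ℝ) ≤ ((2*q - 1 : ℕ) : ℝ) := by exact_mod_cast hk2
    have h21 : ((2*q - 1 : ℕ) : ℝ) = 2 * q - 1 := by
      push_cast [Nat.cast_sub (by omega : 1 ≤ 2*q)]
      ring
    linarith [h0, h21.le, h21.ge]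
  -- from hre : -(kπ)/q = 2nπ, get k = -2 n q
  have hkey : (k : ℝ) = -(2 * n * q) := by
    have h3 := hre
    field_simp at h3
    nlinarith [h3, hπ]
  rcases le_or_gt 0 n with hn0 | hn0
  · have : (0:ℝ) ≤ (n:ℝ) := by exact_mod_cast hn0
    nlinarith
  · have : (n:ℝ) ≤ -1 := by exact_mod_cast (by omega : n ≤ -1)
    nlinarith

lemma lewy_star (ξ : ℂ) (n : ℕ) (hxq : ξ ^ (n + 1) = -1)
    (hrec : ∀ k < n,
      lewyC ξ (k + 1) * (1 - ξ ^ (k + 1)) = -(lewyC ξ k * (1 + ξ ^ (k + 1))))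
    (w : ℂ) :
    (1 + w) * lewyG ξ (n + 1) w = (1 - ξ * w) * lewyG ξ (n + 1) (ξ * w) := by
  have expand : (1 + w) * lewyG ξ (n + 1) w - (1 - ξ * w) * lewyG ξ (n + 1) (ξ * w)
      = (∑ k ∈ Finset.range (n + 1), lewyC ξ k * (1 - ξ ^ k) * w ^ k)
        + ∑ k ∈ Finset.range (n + 1), lewyC ξ k * (1 + ξ ^ (k + 1)) * w ^ (k + 1) := by
    unfold lewyG
    rw [Finset.mul_sum, Finset.mul_sum, ← Finset.sum_sub_distrib,
      ← Finset.sum_add_distrib]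
    apply Finset.sum_congr rfl
    intro k _
    rw [mul_pow]
    ring
  have hA : (∑ k ∈ Finset.range (n + 1), lewyC ξ k * (1 - ξ ^ k) * w ^ k)
      = ∑ k ∈ Finset.range n, lewyC ξ (k + 1) * (1 - ξ ^ (k + 1)) * w ^ (k + 1) := by
    rw [Finset.sum_range_succ']
    simp
  have hB : (∑ k ∈ Finset.range (n + 1), lewyC ξ k * (1 + ξ ^ (k + 1)) * w ^ (k + 1))
      = ∑ k ∈ Finset.range n, lewyC ξ k * (1 + ξ ^ (k + 1)) * w ^ (k + 1) := by
    rw [Finset.sum_range_succ, hxq]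
    simp
  have hzero : (∑ k ∈ Finset.range n, lewyC ξ (k + 1) * (1 - ξ ^ (k + 1)) * w ^ (k + 1))
      + ∑ k ∈ Finset.range n, lewyC ξ k * (1 + ξ ^ (k + 1)) * w ^ (k + 1) = 0 := by
    rw [← Finset.sum_add_distrib]
    apply Finset.sum_eq_zero
    intro k hk
    rw [hrec k (Finset.mem_range.mp hk)]
    ring
  have hfin : (1 + w) * lewyG ξ (n + 1) w - (1 - ξ * w) * lewyG ξ (n + 1) (ξ * w) = 0 := by
    rw [expand, hA, hB, hzero]
  linear_combination hfin

/-- Lewy's lemma, Neumann case: with `ξ = e^{-iπ/q}`, `η(z) = (z+1)/(z-1)`, the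
quantity `P(m) = (1 + ξ^m)(1 + Σ_{k=1}^{q-1} ξ^{km} ∏_{j=1}^k η(ξ^j))`
vanishes for all `q ≤ m ≤ 2q-1`. -/
theorem lewy_vanishing_neumann (q : ℕ) (hq : 1 ≤ q)
    (ξ : ℂ) (hξ : ξ = Complex.exp (-(Real.pi * Complex.I) / q))
    (η : ℂ → ℂ) (hη : ∀ z, η z = (z + 1) / (z - 1))
    (m : ℕ) (hm1 : q ≤ m) (hm2 : m ≤ 2 * q - 1) :
    (1 + ξ ^ m) *
        (1 + ∑ k ∈ Finset.Icc 1 (q - 1),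
            ξ ^ (k * m) * ∏ j ∈ Finset.Icc 1 k, η (ξ ^ j)) = 0 := by
  obtain ⟨n, rfl⟩ : ∃ n, q = n + 1 := ⟨q - 1, by omega⟩
  have hxq : ξ ^ (n + 1) = -1 := by
    rw [hξ, ← Complex.exp_nat_mul]
    have hq0 : ((n : ℂ) + 1) ≠ 0 := Nat.cast_add_one_ne_zero n
    have harg : ((n + 1 : ℕ) : ℂ) * (-(Real.pi * Complex.I) / (n + 1 : ℕ))
        = -(Real.pi * Complex.I) := by
      push_cast
      field_simp
    rw [harg, Complex.exp_neg, Complex.exp_pi_mul_I]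
    norm_num
  have hne1 : ∀ k, 1 ≤ k → k ≤ 2 * (n + 1) - 1 → ξ ^ k ≠ 1 :=
    fun k hk1 hk2 => lewy_pow_ne_one (n + 1) (by omega) ξ hξ k hk1 hk2
  have hne_neg : ∀ k, 1 ≤ k → k ≤ n → (1 : ℂ) + ξ ^ k ≠ 0 := by
    intro k hk1 hk2 h
    have hxk : ξ ^ k = -1 := by linear_combination h
    have hone : ξ ^ (n + 1 + k) = 1 := by
      rw [pow_add, hxq, hxk]; ring
    exact hne1 (n + 1 + k) (by omega) (by omega) hone
  have hrec : ∀ k < n,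
      lewyC ξ (k + 1) * (1 - ξ ^ (k + 1)) = -(lewyC ξ k * (1 + ξ ^ (k + 1))) := by
    intro k hk
    have hstep : lewyC ξ (k + 1)
        = lewyC ξ k * ((ξ ^ (k + 1) + 1) / (ξ ^ (k + 1) - 1)) := by
      unfold lewyC
      rw [Finset.prod_Icc_succ_top (by omega : 1 ≤ k + 1)]
    have hne : ξ ^ (k + 1) - 1 ≠ 0 :=
      sub_ne_zero.mpr (hne1 (k + 1) (by omega) (by omega))
    rw [hstep]
    field_simp
    ring
  have hstar := lewy_star ξ n hxq hrec
  have hGzero : ∀ r, 1 ≤ r → r ≤ n → lewyG ξ (n + 1) (-ξ ^ r) = 0 := by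
    intro r hr1
    induction r, hr1 using Nat.le_induction with
    | base =>
      intro hle
      have h := hstar (-1)
      have h1 : lewyG ξ (n + 1) (ξ * (-1)) = lewyG ξ (n + 1) (-ξ ^ 1) := by
        norm_num
      rw [h1] at h
      have h2 : (1 + ξ ^ 1) * lewyG ξ (n + 1) (-ξ ^ 1) = 0 := by
        linear_combination -h
      exact (mul_eq_zero.mp h2).resolve_left (hne_neg 1 le_rfl hle)
    | succ r hr ih =>
      intro hle
      have hGr := ih (by omega)
      have h := hstar (-ξ ^ r)
      rw [hGr, mul_zero] at h
      have h1 : lewyG ξ (n + 1) (ξ * (-ξ ^ r)) = lewyG ξ (n + 1) (-ξ ^ (r + 1)) := by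
        congr 1
        ring
      rw [h1] at h
      have h2 : (1 + ξ ^ (r + 1)) * lewyG ξ (n + 1) (-ξ ^ (r + 1)) = 0 := by
        linear_combination -h
      exact (mul_eq_zero.mp h2).resolve_left (hne_neg (r + 1) (by omega) hle)
  rcases eq_or_lt_of_le hm1 with heq | hlt
  · -- m = q : first factor vanishes
    rw [← heq, hxq]
    ring
  · -- q < m : second factor equals G(-ξ^r) = 0
    set r := m - (n + 1) with hr
    have hm : m = (n + 1) + r := by omega
    have hr1 : 1 ≤ r := by omega
    have hrn : r ≤ n := by omega
    have hxm : ξ ^ m = -ξ ^ r := by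
      rw [hm, pow_add, hxq]; ring
    have hsum : (1 : ℂ) + ∑ k ∈ Finset.Icc 1 ((n + 1) - 1),
        ξ ^ (k * m) * ∏ j ∈ Finset.Icc 1 k, η (ξ ^ j)
        = lewyG ξ (n + 1) (-ξ ^ r) := by
      unfold lewyG
      rw [Finset.sum_range_succ']
      have hc0 : lewyC ξ 0 * (-ξ ^ r) ^ 0 = 1 := by
        simp [lewyC]
      rw [hc0]
      have hIcc : ((n + 1) - 1) = n := by omega
      rw [hIcc, ← Finset.Ico_add_one_right_eq_Icc, Finset.sum_Ico_eq_sum_range]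
      have hn1 : n + 1 - 1 = n := by omega
      rw [hn1, add_comm]
      congr 1
      apply Finset.sum_congr rfl
      intro k _
      simp only [hη, lewyC]
      rw [← hxm, ← pow_mul, add_comm 1 k, Nat.mul_comm m (k + 1), mul_comm]
    rw [hsum, hGzero r hr1 hrn, mul_zero]
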